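/- Let Γ, Σ, Δ be ranked alphabets, ψ a linear tree homomorphism from Γ to Σ and φ a complete tree homomorphism from Γ to Δ, and let ℓ, n ∈ ℕ be such that ℓ > height(ψ(γ)) for every γ ∈ Γ. Then for every tree s over Γ: if SP^ℓ_{n+1}(ψ̂(s)) ≠ ∅, then SP^ℓ_n(φ̂(s)) ≠ ∅. (In bimorphism terms: for every bimorphism B = (ψ, L, φ) with linear input homomorphism ψ and complete output homomorphism φ and every (t, u) ∈ B, if SP^ℓ_{n+1}(t) ≠ ∅ then SP^ℓ_n(u) ≠ ∅.) -/

import Mathlib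

namespace Paper

/-- Trees over a ranked alphabet `(Γ, ar)` as a W-type. -/
abbrev Tree {Γ : Type} (ar : Γ → ℕ) : Type := WType (fun g : Γ => Fin (ar g))

variable {Γ : Type} {ar : Γ → ℕ}

/-- Root symbol of a tree. -/
def root : Tree ar → Γ
  | ⟨g, _⟩ => g

/-- `inPos t w` holds iff `w` is a position of `t`. -/
def inPos : Tree ar → List ℕ → Prop
  | _, [] => True
  | ⟨g, f⟩, i :: w => ∃ h : i < ar g, inPos (f ⟨i, h⟩) w

/-- The set of positions of a tree. -/
def pos (t : Tree ar) : Set (List ℕ) := {w | inPos t w}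

/-- Subtree of `t` at position `w` (junk value if `w` is not a position of `t`). -/
def subtree : Tree ar → List ℕ → Tree ar
  | t, [] => t
  | ⟨g, f⟩, i :: w => if h : i < ar g then subtree (f ⟨i, h⟩) w else ⟨g, f⟩

/-- Branching positions of `t` together with two distinct successor directions. -/
def branch (t : Tree ar) : Set (List ℕ × ℕ × ℕ) :=
  {p | p.1 ∈ pos t ∧ 2 ≤ ar (root (subtree t p.1)) ∧
       p.2.1 < ar (root (subtree t p.1)) ∧ p.2.2 < ar (root (subtree t p.1)) ∧ p.2.1 ≠ p.2.2}

/-- Branching positions of `t` along the path from `w` to `w ++ w''`. -/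
def branchPath (t : Tree ar) (w w'' : List ℕ) : Set (List ℕ) :=
  {v | ∃ w', w' <+: w'' ∧ v = w ++ w' ∧ ∃ i j, (w ++ w', i, j) ∈ branch t}

/-- First projections of a set of triples. -/
def SPof (S : Set (List ℕ × ℕ × ℕ)) : Set (List ℕ) := {w | ∃ i j, (w, i, j) ∈ S}

/-- The sets `SSP^ℓ_n(t)`. -/
def SSP (ℓ : ℕ) : ℕ → Tree ar → Set (List ℕ × ℕ × ℕ)
  | 0, t => branch t
  | n+1, t =>
      {p | p ∈ branch t ∧
        (∃ w₁ ∈ SPof (SSP ℓ n (subtree t (p.1 ++ [p.2.1]))),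
          ℓ ^ (n+1) ≤ (branchPath t (p.1 ++ [p.2.1]) w₁ ∩ SPof (SSP ℓ n t)).ncard) ∧
        (∃ w₂ ∈ SPof (SSP ℓ n (subtree t (p.1 ++ [p.2.2]))),
          ℓ ^ (n+1) ≤ (branchPath t (p.1 ++ [p.2.2]) w₂ ∩ SPof (SSP ℓ n t)).ncard)}

/-- The sets `SP^ℓ_n(t)`. -/
def SP (ℓ n : ℕ) (t : Tree ar) : Set (List ℕ) := SPof (SSP ℓ n t)

/-- Height of a tree: 0 for leaves, otherwise 1 + maximum height of the subtrees. -/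
def height : Tree ar → ℕ
  | ⟨_, f⟩ => Finset.univ.sup fun i => height (f i) + 1

/-- Arity function for the alphabet `Δ` extended with `k` nullary variables. -/
def extAr {Δ : Type} (arΔ : Δ → ℕ) (k : ℕ) : Δ ⊕ Fin k → ℕ := Sum.elim arΔ fun _ => 0

/-- Trees over `Δ` with variables `x_0, …, x_{k-1}`: the set `T_Δ(X_k)`. -/
abbrev TreeX {Δ : Type} (arΔ : Δ → ℕ) (k : ℕ) : Type := Tree (extAr arΔ k)

variable {Δ : Type} {arΔ : Δ → ℕ}

/-- Substitution `s[u 0, …, u (k-1)]` of trees for the variables. -/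
def subst {k : ℕ} (u : Fin k → Tree arΔ) : TreeX arΔ k → Tree arΔ
  | ⟨Sum.inl d, f⟩ => ⟨d, fun i => subst u (f i)⟩
  | ⟨Sum.inr i, _⟩ => u i

/-- The tree map `ĥ` induced by a tree homomorphism `h`. -/
def applyHom {arΓ : Γ → ℕ} (h : ∀ g : Γ, TreeX arΔ (arΓ g)) : Tree arΓ → Tree arΔ
  | ⟨g, f⟩ => subst (fun i => applyHom h (f i)) (h g)

/-- Number of occurrences of the variable `x_i` in a tree of `T_Δ(X_k)`. -/
def varCount {k : ℕ} (i : Fin k) : TreeX arΔ k → ℕ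
  | ⟨Sum.inl _, f⟩ => ∑ j, varCount i (f j)
  | ⟨Sum.inr j, _⟩ => if j = i then 1 else 0

/-- A tree homomorphism is linear if every variable occurs at most once in each image. -/
def Linear {arΓ : Γ → ℕ} (h : ∀ g : Γ, TreeX arΔ (arΓ g)) : Prop :=
  ∀ (g : Γ) (i : Fin (arΓ g)), varCount i (h g) ≤ 1

/-- A tree homomorphism is complete if every variable occurs at least once in each image. -/
def Complete {arΓ : Γ → ℕ} (h : ∀ g : Γ, TreeX arΔ (arΓ g)) : Prop :=
  ∀ (g : Γ) (i : Fin (arΓ g)), 1 ≤ varCount i (h g)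

end Paper


namespace Paper

variable {Γ : Type} {ar : Γ → ℕ}

/-! ### List helpers -/

lemma prefix_antisymm {a b : List ℕ} (h1 : a <+: b) (h2 : b <+: a) : a = b :=
  h1.eq_of_length (le_antisymm h1.length_le h2.length_le)

lemma prefix_step {x y : List ℕ} (h : x <+: y) (hne : x ≠ y) : ∃ d, x ++ [d] <+: y := by
  obtain ⟨u, rfl⟩ := h
  cases u with
  | nil => simp at hne
  | cons c u' => exact ⟨c, ⟨u', by simp⟩⟩

def lcp : List ℕ → List ℕ → List ℕ
  | a :: as, b :: bs => if a = b then a :: lcp as bs else []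
  | _, _ => []

lemma lcp_div : ∀ (x y : List ℕ), ¬(x <+: y) → ¬(y <+: x) →
    ∃ α β, α ≠ β ∧ lcp x y ++ [α] <+: x ∧ lcp x y ++ [β] <+: y := by
  intro x
  induction x with
  | nil => intro y h1 _; exact absurd (List.nil_prefix) h1
  | cons a as ih =>
    intro y h1 h2
    cases y with
    | nil => exact absurd (List.nil_prefix) h2
    | cons b bs =>
      by_cases hab : a = b
      · subst hab
        have h1' : ¬ (as <+: bs) := fun hc => h1 (by simpa [List.cons_prefix_cons] using hc)
        have h2' : ¬ (bs <+: as) := fun hc => h2 (by simpa [List.cons_prefix_cons] using hc)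
        obtain ⟨α, β, hne, hα, hβ⟩ := ih bs h1' h2'
        exact ⟨α, β, hne, by simpa [lcp, List.cons_prefix_cons] using hα,
          by simpa [lcp, List.cons_prefix_cons] using hβ⟩
      · exact ⟨a, b, hab, by simp [lcp, hab, List.cons_prefix_cons],
          by simp [lcp, hab, List.cons_prefix_cons]⟩

lemma sortChain : ∀ (F : Finset (List ℕ)), (∀ x ∈ F, ∀ y ∈ F, x <+: y ∨ y <+: x) →
    ∃ L : List (List ℕ), L.length = F.card ∧ (∀ v, v ∈ L ↔ v ∈ F) ∧
      L.Pairwise (fun x y => x <+: y ∧ x ≠ y) := by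
  intro F
  induction F using Finset.strongInduction with
  | _ F ih =>
    intro hcomp
    rcases F.eq_empty_or_nonempty with rfl | hne
    · exact ⟨[], by simp⟩
    · obtain ⟨v₀, hv₀, hmin⟩ := Finset.exists_min_image F List.length hne
      have hss : F.erase v₀ ⊂ F := Finset.erase_ssubset hv₀
      obtain ⟨L', hlen, hmem, hpw⟩ := ih _ hss (fun x hx y hy =>
        hcomp x (Finset.mem_of_mem_erase hx) y (Finset.mem_of_mem_erase hy))
      refine ⟨v₀ :: L', ?_, ?_, ?_⟩
      · have hcp := Finset.card_pos.2 hne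
        simp only [List.length_cons, hlen, Finset.card_erase_of_mem hv₀]
        omega
      · intro v
        simp only [List.mem_cons, hmem, Finset.mem_erase]
        constructor
        · rintro (rfl | ⟨_, h⟩) <;> [exact hv₀; exact h]
        · intro hv
          by_cases hvv : v = v₀
          · exact Or.inl hvv
          · exact Or.inr ⟨hvv, hv⟩
      · refine List.pairwise_cons.2 ⟨?_, hpw⟩
        intro w hw
        have hwF : w ∈ F := Finset.mem_of_mem_erase ((hmem w).1 hw)
        have hwne : w ≠ v₀ := (Finset.mem_erase.1 ((hmem w).1 hw)).1
        rcases hcomp v₀ hv₀ w hwF with h | h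
        · exact ⟨h, fun hh => hwne (hh ▸ rfl)⟩
        · have : w = v₀ := h.eq_of_length (le_antisymm h.length_le (hmin w hwF))
          exact absurd this hwne

/-! ### Position lemmas -/

lemma inPos_nil (t : Tree ar) : inPos t [] := by cases t; exact trivial

lemma subtree_nil (t : Tree ar) : subtree t [] = t := by cases t; rfl

lemma inPos_nil_iff (t : Tree ar) : inPos t [] ↔ True := by cases t; exact Iff.rfl

lemma inPos_cons {g : Γ} {f : Fin (ar g) → Tree ar} {i : ℕ} {w : List ℕ} :
    inPos (⟨g, f⟩ : Tree ar) (i :: w) ↔ ∃ h : i < ar g, inPos (f ⟨i, h⟩) w := Iff.rfl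

lemma subtree_cons {g : Γ} {f : Fin (ar g) → Tree ar} {i : ℕ} {w : List ℕ} :
    subtree (⟨g, f⟩ : Tree ar) (i :: w)
      = if h : i < ar g then subtree (f ⟨i, h⟩) w else ⟨g, f⟩ := rfl

lemma inPos_prefix : ∀ {w₂ w₁ : List ℕ} {t : Tree ar}, w₁ <+: w₂ → inPos t w₂ → inPos t w₁ := by
  intro w₂
  induction w₂ with
  | nil => intro w₁ t h _; rw [List.prefix_nil.1 h]; exact inPos_nil t
  | cons i w₂' ih =>
    intro w₁ t h hp
    cases w₁ with
    | nil => exact inPos_nil t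
    | cons j w₁' =>
      rw [List.cons_prefix_cons] at h
      obtain ⟨rfl, h⟩ := h
      cases t with
      | mk g f =>
        obtain ⟨hi, hp⟩ := hp
        exact ⟨hi, ih h hp⟩

lemma subtree_append : ∀ {w₁ w₂ : List ℕ} {t : Tree ar}, inPos t w₁ →
    subtree t (w₁ ++ w₂) = subtree (subtree t w₁) w₂ := by
  intro w₁
  induction w₁ with
  | nil => intro w₂ t _; simp [subtree_nil]
  | cons i w' ih =>
    intro w₂ t hp
    cases t with
    | mk g f =>
      obtain ⟨hi, hp⟩ := hp
      show subtree (⟨g, f⟩ : Tree ar) (i :: (w' ++ w₂)) = _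
      rw [subtree_cons, subtree_cons, dif_pos hi, dif_pos hi]
      exact ih hp

lemma inPos_append : ∀ {w₁ w₂ : List ℕ} {t : Tree ar}, inPos t w₁ →
    (inPos t (w₁ ++ w₂) ↔ inPos (subtree t w₁) w₂) := by
  intro w₁
  induction w₁ with
  | nil => intro w₂ t _; simp [subtree_nil]
  | cons i w' ih =>
    intro w₂ t hp
    cases t with
    | mk g f =>
      obtain ⟨hi, hp⟩ := hp
      rw [subtree_cons, dif_pos hi]
      show (∃ h : i < ar g, inPos (f ⟨i, h⟩) (w' ++ w₂)) ↔ _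
      constructor
      · rintro ⟨h, hh⟩; exact (ih hp).1 hh
      · intro h; exact ⟨hi, (ih hp).2 h⟩

lemma arity_zero_append {t : Tree ar} {w x : List ℕ} (h : inPos t (w ++ x))
    (hz : ar (root (subtree t w)) = 0) : x = [] := by
  have hw : inPos t w := inPos_prefix ⟨x, rfl⟩ h
  have hx : inPos (subtree t w) x := (inPos_append hw).1 h
  cases hs : subtree t w with
  | mk g f =>
    rw [hs] at hx hz
    cases x with
    | nil => rfl
    | cons k x' =>
      obtain ⟨hk, _⟩ := hx
      rw [show root (⟨g,f⟩ : Tree ar) = g from rfl] at hz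
      omega

end Paper

namespace Paper

variable {Γ : Type} {ar : Γ → ℕ}

/-! ### branch and SSP lemmas -/

lemma branch_side_pos {t : Tree ar} {w : List ℕ} {i j : ℕ} (h : (w, i, j) ∈ branch t) :
    inPos t (w ++ [i]) := by
  obtain ⟨hw, _, hi, _, _⟩ := h
  rw [inPos_append hw]
  cases hs : subtree t w with
  | mk g f =>
    rw [hs] at hi
    exact ⟨hi, inPos_nil _⟩

lemma branch_swap {t : Tree ar} {w : List ℕ} {i j : ℕ} (h : (w, i, j) ∈ branch t) :
    (w, j, i) ∈ branch t :=
  ⟨h.1, h.2.1, h.2.2.2.1, h.2.2.1, Ne.symm h.2.2.2.2⟩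

lemma branch_side_pos' {t : Tree ar} {w : List ℕ} {i j : ℕ} (h : (w, i, j) ∈ branch t) :
    inPos t (w ++ [j]) := branch_side_pos (branch_swap h)

lemma branch_append {t : Tree ar} {q : List ℕ} (hq : inPos t q) {r : List ℕ} {i j : ℕ} :
    ((r, i, j) ∈ branch (subtree t q)) ↔ ((q ++ r, i, j) ∈ branch t) := by
  constructor
  · rintro ⟨hp, h2, hi, hj, hne⟩
    refine ⟨(inPos_append hq).2 hp, ?_, ?_, ?_, hne⟩ <;>
      (rw [show subtree t (q ++ r) = subtree (subtree t q) r from subtree_append hq]) <;>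
      assumption
  · rintro ⟨hp, h2, hi, hj, hne⟩
    rw [show subtree t (q ++ r) = subtree (subtree t q) r from subtree_append hq] at h2 hi hj
    exact ⟨(inPos_append hq).1 hp, h2, hi, hj, hne⟩

lemma SSP_subset_branch {ℓ n : ℕ} {t : Tree ar} : SSP ℓ n t ⊆ branch t := by
  cases n with
  | zero => exact fun p hp => hp
  | succ n => exact fun p hp => hp.1

lemma SP_branch {ℓ n : ℕ} {t : Tree ar} {x : List ℕ} (h : x ∈ SP ℓ n t) :
    ∃ i j, (x, i, j) ∈ branch t := by
  obtain ⟨i, j, hij⟩ := h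
  exact ⟨i, j, SSP_subset_branch hij⟩

lemma SP_pos {ℓ n : ℕ} {t : Tree ar} {x : List ℕ} (h : x ∈ SP ℓ n t) : inPos t x := by
  obtain ⟨i, j, hij⟩ := SP_branch h
  exact hij.1

lemma prefixes_finite (b : List ℕ) : {x : List ℕ | x <+: b}.Finite := by
  apply Set.Finite.subset (List.inits b).toFinset.finite_toSet
  intro x hx
  have : x ∈ b.inits := (List.mem_inits x b).2 hx
  exact Finset.mem_coe.2 (List.mem_toFinset.2 this)

/-- The set of positions in `SP ℓ n t` lying on the path from `a` to `b`. -/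
def chainSet (ℓ n : ℕ) (t : Tree ar) (a b : List ℕ) : Set (List ℕ) :=
  {x | a <+: x ∧ x <+: b ∧ x ∈ SP ℓ n t}

lemma chainSet_finite (ℓ n : ℕ) (t : Tree ar) (a b : List ℕ) : (chainSet ℓ n t a b).Finite :=
  Set.Finite.subset (prefixes_finite b) (fun _ hx => hx.2.1)

lemma chainSet_mono_left {ℓ n : ℕ} {t : Tree ar} {a a' b : List ℕ} (h : a' <+: a) :
    chainSet ℓ n t a b ⊆ chainSet ℓ n t a' b :=
  fun _ hx => ⟨h.trans hx.1, hx.2⟩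

lemma branchPath_inter_eq (ℓ n : ℕ) (t : Tree ar) (a w₁ : List ℕ) :
    branchPath t a w₁ ∩ SPof (SSP ℓ n t) = chainSet ℓ n t a (a ++ w₁) := by
  ext y
  constructor
  · rintro ⟨⟨w', hw', rfl, _⟩, hsp⟩
    exact ⟨⟨w', rfl⟩, (List.prefix_append_right_inj a).2 hw', hsp⟩
  · rintro ⟨⟨w', rfl⟩, hy, hsp⟩
    obtain ⟨i, j, hbr⟩ := SP_branch hsp
    exact ⟨⟨w', (List.prefix_append_right_inj a).1 hy, rfl, i, j, hbr⟩, hsp⟩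

lemma SSP_append {t : Tree ar} {q : List ℕ} (ℓ : ℕ) (hq : inPos t q) :
    ∀ (n : ℕ) (r : List ℕ) (i j : ℕ),
      ((r, i, j) ∈ SSP ℓ n (subtree t q) ↔ (q ++ r, i, j) ∈ SSP ℓ n t) := by
  intro n
  induction n with
  | zero => intro r i j; exact branch_append hq
  | succ n ih =>
    intro r i j
    have hSPx : ∀ x, x ∈ SPof (SSP ℓ n (subtree t q)) ↔ q ++ x ∈ SPof (SSP ℓ n t) := by
      intro x
      constructor
      · rintro ⟨i', j', h⟩; exact ⟨i', j', (ih x i' j').1 h⟩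
      · rintro ⟨i', j', h⟩; exact ⟨i', j', (ih x i' j').2 h⟩
    have e2 : ∀ a w₁ : List ℕ, branchPath t (q ++ a) w₁ ∩ SPof (SSP ℓ n t)
        = (q ++ ·) '' (branchPath (subtree t q) a w₁ ∩ SPof (SSP ℓ n (subtree t q))) := by
      intro a w₁
      ext y
      simp only [Set.mem_inter_iff, Set.mem_image, branchPath, Set.mem_setOf_eq]
      constructor
      · rintro ⟨⟨w', hw', rfl, i', j', hbr⟩, hsp⟩
        refine ⟨a ++ w', ⟨⟨w', hw', rfl, i', j', ?_⟩, ?_⟩, (List.append_assoc q a w').symm⟩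
        · rw [branch_append hq, ← List.append_assoc]; exact hbr
        · exact (hSPx _).2 (by rw [List.append_assoc] at hsp; exact hsp)
      · rintro ⟨z, ⟨⟨w', hw', rfl, i', j', hbr⟩, hsp⟩, rfl⟩
        constructor
        · refine ⟨w', hw', (List.append_assoc q a w').symm, i', j', ?_⟩
          rw [List.append_assoc]; exact (branch_append hq).1 hbr
        · exact (hSPx _).1 hsp
    have hside : ∀ d : ℕ,
        ((∃ w₁ ∈ SPof (SSP ℓ n (subtree (subtree t q) (r ++ [d]))),
            ℓ ^ (n+1) ≤ (branchPath (subtree t q) (r ++ [d]) w₁ ∩ SPof (SSP ℓ n (subtree t q))).ncard)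
          ↔ (∃ w₁ ∈ SPof (SSP ℓ n (subtree t ((q ++ r) ++ [d]))),
            ℓ ^ (n+1) ≤ (branchPath t ((q ++ r) ++ [d]) w₁ ∩ SPof (SSP ℓ n t)).ncard)) := by
      intro d
      have ea : (q ++ r) ++ [d] = q ++ (r ++ [d]) := List.append_assoc q r [d]
      have e1 : subtree (subtree t q) (r ++ [d]) = subtree t ((q ++ r) ++ [d]) := by
        rw [ea, subtree_append hq]
      rw [e1, ea]
      apply exists_congr; intro w₁
      apply and_congr_right; intro _
      rw [e2, Set.ncard_image_of_injective _ (List.append_right_injective q)]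
    exact and_congr (branch_append hq) (and_congr (hside i) (hside j))

end Paper

namespace Paper

variable {Γ : Type} {ar : Γ → ℕ}

lemma SP_append {ℓ n : ℕ} {t : Tree ar} {q : List ℕ} (hq : inPos t q) {x : List ℕ} :
    x ∈ SP ℓ n (subtree t q) ↔ q ++ x ∈ SP ℓ n t := by
  constructor
  · rintro ⟨i', j', h⟩; exact ⟨i', j', (SSP_append ℓ hq n x i' j').1 h⟩
  · rintro ⟨i', j', h⟩; exact ⟨i', j', (SSP_append ℓ hq n x i' j').2 h⟩

lemma exists_max_prefix {K : Set (List ℕ)} (hfin : K.Finite) (hne : K.Nonempty)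
    (b : List ℕ) (hb : ∀ x ∈ K, x <+: b) : ∃ x₀ ∈ K, ∀ y ∈ K, y <+: x₀ := by
  obtain ⟨x₀, hx₀, hmax⟩ := Set.Finite.exists_maximalFor List.length K hfin hne
  refine ⟨x₀, hx₀, fun y hy => ?_⟩
  rcases List.prefix_or_prefix_of_prefix (hb x₀ hx₀) (hb y hy) with h | h
  · have heq := h.eq_of_length (le_antisymm h.length_le (hmax hy h.length_le))
    rw [← heq]
  · exact h

lemma side_iff {ℓ n : ℕ} (hl : 1 ≤ ℓ) {t : Tree ar} {a : List ℕ} (ha : inPos t a) :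
    (∃ w₁ ∈ SPof (SSP ℓ n (subtree t a)),
        ℓ ^ (n+1) ≤ (branchPath t a w₁ ∩ SPof (SSP ℓ n t)).ncard)
      ↔ (∃ b, ℓ ^ (n+1) ≤ (chainSet ℓ n t a b).ncard) := by
  constructor
  · rintro ⟨w₁, _, hc⟩
    refine ⟨a ++ w₁, ?_⟩
    rwa [branchPath_inter_eq] at hc
  · rintro ⟨b, hc⟩
    have hfin := chainSet_finite ℓ n t a b
    have hne : (chainSet ℓ n t a b).Nonempty := by
      apply Set.nonempty_of_ncard_ne_zero
      have h1 : 1 ≤ ℓ ^ (n+1) := Nat.one_le_pow _ _ hl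
      omega
    obtain ⟨x₀, hx₀, hmax⟩ := exists_max_prefix hfin hne b (fun x hx => hx.2.1)
    obtain ⟨w₁, rfl⟩ := hx₀.1
    refine ⟨w₁, ?_, ?_⟩
    · obtain ⟨i', j', hs⟩ := hx₀.2.2
      exact ⟨i', j', (SSP_append ℓ ha n w₁ i' j').2 hs⟩
    · rw [branchPath_inter_eq]
      refine le_trans hc (Set.ncard_le_ncard ?_ (chainSet_finite _ _ _ _ _))
      intro y hy
      exact ⟨hy.1, hmax y hy, hy.2.2⟩

lemma mem_SSP_succ_iff {ℓ n : ℕ} (hl : 1 ≤ ℓ) {t : Tree ar} {w : List ℕ} {i j : ℕ} :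
    (w, i, j) ∈ SSP ℓ (n+1) t ↔ (w, i, j) ∈ branch t ∧
      (∃ b, ℓ ^ (n+1) ≤ (chainSet ℓ n t (w ++ [i]) b).ncard) ∧
      (∃ b, ℓ ^ (n+1) ≤ (chainSet ℓ n t (w ++ [j]) b).ncard) := by
  constructor
  · rintro ⟨hbr, h1, h2⟩
    exact ⟨hbr, (side_iff hl (branch_side_pos hbr)).1 h1,
      (side_iff hl (branch_side_pos' hbr)).1 h2⟩
  · rintro ⟨hbr, h1, h2⟩
    exact ⟨hbr, (side_iff hl (branch_side_pos hbr)).2 h1,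
      (side_iff hl (branch_side_pos' hbr)).2 h2⟩

end Paper

namespace Paper

variable {Δ : Type} {arΔ : Δ → ℕ}

/-! ### Substitution lemmas -/

@[simp] lemma root_mk {Γ : Type} {ar : Γ → ℕ} (g : Γ) (f : Fin (ar g) → Tree ar) :
    root (⟨g, f⟩ : Tree ar) = g := rfl

@[simp] lemma extAr_inl {k : ℕ} (d : Δ) : extAr arΔ k (Sum.inl d) = arΔ d := rfl

@[simp] lemma extAr_inr {k : ℕ} (i : Fin k) : extAr arΔ k (Sum.inr i) = 0 := rfl

def isVarPos {k : ℕ} (e : TreeX arΔ k) (π : List ℕ) (i : Fin k) : Prop :=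
  inPos e π ∧ root (subtree e π) = Sum.inr i

lemma subst_mk_inl {k : ℕ} (u : Fin k → Tree arΔ) (d : Δ) (f) :
    subst u (⟨Sum.inl d, f⟩ : TreeX arΔ k) = ⟨d, fun i => subst u (f i)⟩ := rfl

lemma subst_mk_inr {k : ℕ} (u : Fin k → Tree arΔ) (i : Fin k) (f) :
    subst u (⟨Sum.inr i, f⟩ : TreeX arΔ k) = u i := rfl

lemma subst_subtree {k : ℕ} (u : Fin k → Tree arΔ) :
    ∀ (π : List ℕ) (e : TreeX arΔ k), inPos e π →
      subtree (subst u e) π = subst u (subtree e π) := by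
  intro π
  induction π with
  | nil => intro e _; rw [subtree_nil, subtree_nil]
  | cons a π' ih =>
    intro e hp
    cases e with
    | mk ge fe =>
      cases ge with
      | inl d =>
        obtain ⟨ha, hp'⟩ := hp
        rw [subst_mk_inl, subtree_cons, subtree_cons, dif_pos ha,
          dif_pos (show a < arΔ d from ha)]
        exact ih _ hp'
      | inr i =>
        obtain ⟨ha, _⟩ := hp
        exact absurd ha (by simp [extAr])

lemma subst_inPos {k : ℕ} (u : Fin k → Tree arΔ) :
    ∀ (π : List ℕ) (e : TreeX arΔ k), inPos e π → inPos (subst u e) π := by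
  intro π
  induction π with
  | nil => intro e _; exact inPos_nil _
  | cons a π' ih =>
    intro e hp
    cases e with
    | mk ge fe =>
      cases ge with
      | inl d =>
        obtain ⟨ha, hp'⟩ := hp
        rw [subst_mk_inl]
        exact ⟨show a < arΔ d from ha, ih _ hp'⟩
      | inr i =>
        obtain ⟨ha, _⟩ := hp
        exact absurd ha (by simp [extAr])

lemma isVarPos_subtree {k : ℕ} (u : Fin k → Tree arΔ) {e : TreeX arΔ k} {π : List ℕ}
    {i : Fin k} (h : isVarPos e π i) : subtree (subst u e) π = u i := by
  rw [subst_subtree u π e h.1]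
  have h2 := h.2
  cases hs : subtree e π with
  | mk ge fe =>
    rw [hs] at h2
    cases ge with
    | inl d => exact absurd h2 (by simp [root])
    | inr i' =>
      have : i' = i := by simpa [root] using h2
      subst this
      rfl

lemma pos_split {k : ℕ} (u : Fin k → Tree arΔ) :
    ∀ (e : TreeX arΔ k) (x : List ℕ), inPos (subst u e) x →
      (inPos e x ∧ ∃ d, root (subtree e x) = Sum.inl d) ∨
      (∃ (i : Fin k) (π y : List ℕ), isVarPos e π i ∧ x = π ++ y ∧ inPos (u i) y) := by
  intro e
  induction e with
  | mk ge fe ih =>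
    cases ge with
    | inr i =>
      intro x hx
      right
      exact ⟨i, [], x, ⟨inPos_nil _, by rw [subtree_nil]; rfl⟩, rfl, hx⟩
    | inl d =>
      intro x hx
      cases x with
      | nil => left; exact ⟨inPos_nil _, d, by rw [subtree_nil]; rfl⟩
      | cons a x' =>
        obtain ⟨ha, h'⟩ := hx
        have ha' : a < extAr arΔ k (Sum.inl d) := ha
        rcases ih ⟨a, ha⟩ x' h' with ⟨hp, d', hd'⟩ | ⟨i, π, y, hv, rfl, hy⟩
        · left
          refine ⟨⟨ha', hp⟩, d', ?_⟩
          rw [subtree_cons, dif_pos ha']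
          exact hd'
        · right
          refine ⟨i, a :: π, y, ⟨⟨ha', hv.1⟩, ?_⟩, rfl, hy⟩
          rw [subtree_cons, dif_pos ha']
          exact hv.2

lemma isVarPos_of_count {k : ℕ} :
    ∀ (e : TreeX arΔ k) (i : Fin k), 1 ≤ varCount i e → ∃ π, isVarPos e π i := by
  intro e
  induction e with
  | mk ge fe ih =>
    cases ge with
    | inr j =>
      intro i hc
      by_cases hji : j = i
      · subst hji
        exact ⟨[], inPos_nil _, by rw [subtree_nil]; rfl⟩
      · rw [show varCount i (⟨Sum.inr j, fe⟩ : TreeX arΔ k) = if j = i then 1 else 0 from rfl,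
          if_neg hji] at hc
        omega
    | inl d =>
      intro i hc
      rw [show varCount i (⟨Sum.inl d, fe⟩ : TreeX arΔ k) = ∑ j, varCount i (fe j) from rfl] at hc
      have hne : ∑ j, varCount i (fe j) ≠ 0 := by omega
      obtain ⟨j, _, hj⟩ := Finset.exists_ne_zero_of_sum_ne_zero hne
      obtain ⟨π, hπ⟩ := ih j i (by omega)
      refine ⟨(j : ℕ) :: π, ⟨j.isLt, ?_⟩, ?_⟩
      · exact hπ.1
      · rw [subtree_cons, dif_pos j.isLt]
        exact hπ.2

lemma count_of_isVarPos {k : ℕ} :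
    ∀ (π : List ℕ) (e : TreeX arΔ k) (i : Fin k), isVarPos e π i → 1 ≤ varCount i e := by
  intro π
  induction π with
  | nil =>
    intro e i h
    cases e with
    | mk ge fe =>
      have h2 := h.2
      rw [subtree_nil] at h2
      cases ge with
      | inl d => exact absurd h2 (by simp [root])
      | inr j =>
        have : j = i := by simpa [root] using h2
        subst this
        rw [show varCount j (⟨Sum.inr j, fe⟩ : TreeX arΔ k) = if j = j then 1 else 0 from rfl,
          if_pos rfl]
  | cons a π' ih =>
    intro e i h
    cases e with
    | mk ge fe =>
      cases ge with
      | inr j => exact absurd h.1.choose (by simp [extAr, Nat.not_lt_zero])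
      | inl d =>
        obtain ⟨ha, hp'⟩ := h.1
        have h2 := h.2
        rw [subtree_cons, dif_pos ha] at h2
        have hsub : isVarPos (fe ⟨a, ha⟩) π' i := ⟨hp', h2⟩
        have hone := ih _ i hsub
        rw [show varCount i (⟨Sum.inl d, fe⟩ : TreeX arΔ k) = ∑ j, varCount i (fe j) from rfl]
        calc 1 ≤ varCount i (fe ⟨a, ha⟩) := hone
          _ ≤ ∑ j, varCount i (fe j) :=
            Finset.single_le_sum (f := fun j => varCount i (fe j))
              (fun _ _ => Nat.zero_le _) (Finset.mem_univ (⟨a, ha⟩ : Fin (arΔ d)))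

lemma isVarPos_unique {k : ℕ} :
    ∀ (e : TreeX arΔ k) (i : Fin k), varCount i e ≤ 1 →
      ∀ π₁ π₂, isVarPos e π₁ i → isVarPos e π₂ i → π₁ = π₂ := by
  intro e
  induction e with
  | mk ge fe ih =>
    cases ge with
    | inr j =>
      intro i _ π₁ π₂ h1 h2
      have e1 : π₁ = [] := by
        cases π₁ with
        | nil => rfl
        | cons a _ => exact absurd h1.1.choose (by simp [extAr])
      have e2 : π₂ = [] := by
        cases π₂ with
        | nil => rfl
        | cons a _ => exact absurd h2.1.choose (by simp [extAr])
      rw [e1, e2]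
    | inl d =>
      intro i hc π₁ π₂ h1 h2
      cases π₁ with
      | nil =>
        have := h1.2; rw [subtree_nil] at this
        exact absurd this (by simp [root])
      | cons a₁ π₁' =>
        cases π₂ with
        | nil =>
          have := h2.2; rw [subtree_nil] at this
          exact absurd this (by simp [root])
        | cons a₂ π₂' =>
          obtain ⟨ha₁, hp₁⟩ := h1.1
          obtain ⟨ha₂, hp₂⟩ := h2.1
          have hs₁ := h1.2; rw [subtree_cons, dif_pos ha₁] at hs₁
          have hs₂ := h2.2; rw [subtree_cons, dif_pos ha₂] at hs₂
          have hv₁ : isVarPos (fe ⟨a₁, ha₁⟩) π₁' i := ⟨hp₁, hs₁⟩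
          have hv₂ : isVarPos (fe ⟨a₂, ha₂⟩) π₂' i := ⟨hp₂, hs₂⟩
          rw [show varCount i (⟨Sum.inl d, fe⟩ : TreeX arΔ k) = ∑ j, varCount i (fe j) from rfl]
            at hc
          by_cases haa : a₁ = a₂
          · subst haa
            have hterm : varCount i (fe ⟨a₁, ha₁⟩) ≤ 1 :=
              le_trans (Finset.single_le_sum (f := fun j => varCount i (fe j))
                (fun _ _ => Nat.zero_le _) (Finset.mem_univ (⟨a₁, ha₁⟩ : Fin (arΔ d)))) hc
            rw [ih _ i hterm π₁' π₂' hv₁ hv₂]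
          · exfalso
            have hne : (⟨a₁, ha₁⟩ : Fin (arΔ d)) ≠ ⟨a₂, ha₂⟩ := by
              intro hh; exact haa (congrArg Fin.val hh)
            have hsum : varCount i (fe ⟨a₁, ha₁⟩) + varCount i (fe ⟨a₂, ha₂⟩)
                ≤ ∑ j, varCount i (fe j) :=
              Finset.add_le_sum (f := fun j => varCount i (fe j))
                (fun _ _ => Nat.zero_le _) (Finset.mem_univ (⟨a₁, ha₁⟩ : Fin (arΔ d)))
                (Finset.mem_univ (⟨a₂, ha₂⟩ : Fin (arΔ d))) hne
            have c₁ := count_of_isVarPos π₁' _ i hv₁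
            have c₂ := count_of_isVarPos π₂' _ i hv₂
            omega

lemma isVarPos_not_prefix {k : ℕ} {e : TreeX arΔ k} {π₁ π₂ : List ℕ} {i₁ i₂ : Fin k}
    (h1 : isVarPos e π₁ i₁) (h2 : isVarPos e π₂ i₂) (hne : i₁ ≠ i₂) : ¬ (π₁ <+: π₂) := by
  rintro ⟨z, rfl⟩
  have hz : z = [] := arity_zero_append h2.1 (by rw [h1.2]; rfl)
  subst hz
  rw [List.append_nil] at h2
  have := h1.2.symm.trans h2.2
  exact hne (by simpa using this)

end Paper

namespace Paper

variable {Γ Δ : Type} {arΓ : Γ → ℕ} {arΔ : Δ → ℕ}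

open Classical in
noncomputable def occ (h : ∀ g : Γ, TreeX arΔ (arΓ g)) (g : Γ) (i : ℕ) : List ℕ :=
  if hi : i < arΓ g then
    (if he : ∃ π, isVarPos (h g) π ⟨i, hi⟩ then he.choose else [])
  else []

lemma occ_spec (h : ∀ g : Γ, TreeX arΔ (arΓ g)) (g : Γ) {i : ℕ} (hi : i < arΓ g)
    (he : ∃ π, isVarPos (h g) π ⟨i, hi⟩) : isVarPos (h g) (occ h g i) ⟨i, hi⟩ := by
  rw [occ, dif_pos hi]
  rw [dif_pos he]
  exact he.choose_spec

/-- Unique occurrences: for a linear homomorphism, every occurrence is the chosen one. -/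
lemma occ_eq_of_linear {h : ∀ g : Γ, TreeX arΔ (arΓ g)} (hlin : Linear h) (g : Γ)
    {i : ℕ} (hi : i < arΓ g) {π : List ℕ} (hπ : isVarPos (h g) π ⟨i, hi⟩) :
    π = occ h g i :=
  isVarPos_unique (h g) ⟨i, hi⟩ (hlin g ⟨i, hi⟩) π _ hπ (occ_spec h g hi ⟨π, hπ⟩)

def okE (h : ∀ g : Γ, TreeX arΔ (arΓ g)) : Tree arΓ → List ℕ → Prop
  | _, [] => True
  | ⟨g, f⟩, i :: v => ∃ hi : i < arΓ g, (∃ π, isVarPos (h g) π ⟨i, hi⟩) ∧ okE h (f ⟨i, hi⟩) v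

lemma okE_nil (h : ∀ g : Γ, TreeX arΔ (arΓ g)) (s : Tree arΓ) : okE h s [] := by
  cases s; exact trivial

lemma okE_inPos {h : ∀ g : Γ, TreeX arΔ (arΓ g)} :
    ∀ {v : List ℕ} {s : Tree arΓ}, okE h s v → inPos s v := by
  intro v
  induction v with
  | nil => intro s _; exact inPos_nil _
  | cons i v' ih =>
    intro s hok
    cases s with
    | mk g f =>
      obtain ⟨hi, _, hok'⟩ := hok
      exact ⟨hi, ih hok'⟩

lemma okE_of_complete {h : ∀ g : Γ, TreeX arΔ (arΓ g)} (hc : Complete h) :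
    ∀ {v : List ℕ} {s : Tree arΓ}, inPos s v → okE h s v := by
  intro v
  induction v with
  | nil => intro s _; exact okE_nil h s
  | cons i v' ih =>
    intro s hp
    cases s with
    | mk g f =>
      obtain ⟨hi, hp'⟩ := hp
      exact ⟨hi, isVarPos_of_count (h g) ⟨i, hi⟩ (hc g ⟨i, hi⟩), ih hp'⟩

lemma okE_append {h : ∀ g : Γ, TreeX arΔ (arΓ g)} :
    ∀ {v : List ℕ} (w : List ℕ) {s : Tree arΓ}, okE h s (v ++ w) →
      okE h s v ∧ okE h (subtree s v) w := by
  intro v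
  induction v with
  | nil => intro w s hw; rw [subtree_nil]; exact ⟨okE_nil h s, hw⟩
  | cons i v' ih =>
    intro w s hok
    cases s with
    | mk g f =>
      obtain ⟨hi, he, hok'⟩ := hok
      obtain ⟨h1, h2⟩ := ih w hok'
      refine ⟨⟨hi, he, h1⟩, ?_⟩
      rw [subtree_cons, dif_pos hi]
      exact h2

lemma okE_prefix {h : ∀ g : Γ, TreeX arΔ (arΓ g)} {v V : List ℕ} {s : Tree arΓ}
    (hpre : v <+: V) (hok : okE h s V) : okE h s v := by
  obtain ⟨w, rfl⟩ := hpre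
  exact (okE_append w hok).1

def emb (O : (g : Γ) → ℕ → List ℕ) : Tree arΓ → List ℕ → List ℕ
  | _, [] => []
  | ⟨g, f⟩, i :: v => O g i ++ (if hi : i < arΓ g then emb O (f ⟨i, hi⟩) v else [])

lemma emb_nil (O : (g : Γ) → ℕ → List ℕ) (s : Tree arΓ) : emb O s [] = [] := by
  cases s; rfl

lemma emb_cons (O : (g : Γ) → ℕ → List ℕ) {g : Γ} (f : Fin (arΓ g) → Tree arΓ)
    {i : ℕ} (hi : i < arΓ g) (v : List ℕ) :
    emb O (⟨g, f⟩ : Tree arΓ) (i :: v) = O g i ++ emb O (f ⟨i, hi⟩) v := by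
  show O g i ++ _ = _
  rw [dif_pos hi]

lemma emb_append (O : (g : Γ) → ℕ → List ℕ) :
    ∀ {v : List ℕ} (w : List ℕ) {s : Tree arΓ}, inPos s v →
      emb O s (v ++ w) = emb O s v ++ emb O (subtree s v) w := by
  intro v
  induction v with
  | nil => intro w s _; simp [emb_nil, subtree_nil]
  | cons i v' ih =>
    intro w s hp
    cases s with
    | mk g f =>
      obtain ⟨hi, hp'⟩ := hp
      show emb O (⟨g, f⟩ : Tree arΓ) (i :: (v' ++ w)) = _
      rw [emb_cons O f hi, emb_cons O f hi, subtree_cons, dif_pos hi, ih w hp',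
        List.append_assoc]

lemma emb_prefix (O : (g : Γ) → ℕ → List ℕ) {v V : List ℕ} {s : Tree arΓ}
    (hv : inPos s v) (hpre : v <+: V) : emb O s v <+: emb O s V := by
  obtain ⟨w, rfl⟩ := hpre
  rw [emb_append O w hv]
  exact ⟨_, rfl⟩

lemma emb_singleton (O : (g : Γ) → ℕ → List ℕ) {g : Γ} (f : Fin (arΓ g) → Tree arΓ)
    {e : ℕ} (he : e < arΓ g) : emb O (⟨g, f⟩ : Tree arΓ) [e] = O g e := by
  rw [emb_cons O f he, emb_nil, List.append_nil]

lemma applyHom_mk (h : ∀ g : Γ, TreeX arΔ (arΓ g)) (g : Γ) (f : Fin (arΓ g) → Tree arΓ) :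
    applyHom h (⟨g, f⟩ : Tree arΓ) = subst (fun i => applyHom h (f i)) (h g) := rfl

lemma emb_main (h : ∀ g : Γ, TreeX arΔ (arΓ g)) :
    ∀ {v : List ℕ} {s : Tree arΓ}, okE h s v →
      inPos (applyHom h s) (emb (occ h) s v) ∧
        subtree (applyHom h s) (emb (occ h) s v) = applyHom h (subtree s v) := by
  intro v
  induction v with
  | nil =>
    intro s _
    rw [emb_nil, subtree_nil, subtree_nil]
    exact ⟨inPos_nil _, rfl⟩
  | cons i v' ih =>
    intro s hok
    cases s with
    | mk g f =>
      obtain ⟨hi, he, hok'⟩ := hok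
      have hvp : isVarPos (h g) (occ h g i) ⟨i, hi⟩ := occ_spec h g hi he
      have hsub : subtree (applyHom h (⟨g, f⟩ : Tree arΓ)) (occ h g i)
          = applyHom h (f ⟨i, hi⟩) := by
        rw [applyHom_mk]
        exact isVarPos_subtree (fun k => applyHom h (f k)) hvp
      have hposπ : inPos (applyHom h (⟨g, f⟩ : Tree arΓ)) (occ h g i) := by
        rw [applyHom_mk]
        exact subst_inPos _ _ _ hvp.1
      obtain ⟨ih1, ih2⟩ := ih hok'
      rw [emb_cons (occ h) f hi]
      constructor
      · rw [inPos_append hposπ, hsub]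
        exact ih1
      · rw [subtree_append hposπ, hsub, ih2, subtree_cons, dif_pos hi]

end Paper

namespace Paper

variable {Γ : Type} {ar : Γ → ℕ}

lemma height_mk (g : Γ) (f : Fin (ar g) → Tree ar) :
    height (⟨g, f⟩ : Tree ar) = Finset.univ.sup fun i => height (f i) + 1 := rfl

lemma length_lt_height : ∀ {r : List ℕ} {t : Tree ar}, inPos t r →
    1 ≤ ar (root (subtree t r)) → r.length < height t := by
  intro r
  induction r with
  | nil =>
    intro t _ h1
    cases t with
    | mk g f =>
      rw [subtree_nil, root_mk] at h1
      have h0 : 0 < ar g := h1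
      calc ([] : List ℕ).length = 0 := rfl
        _ < height (f ⟨0, h0⟩) + 1 := Nat.succ_pos _
        _ ≤ height (⟨g, f⟩ : Tree ar) := by
            rw [height_mk]
            exact Finset.le_sup (f := fun i => height (f i) + 1) (Finset.mem_univ (⟨0, h0⟩ : Fin (ar g)))
  | cons a r' ih =>
    intro t hp h1
    cases t with
    | mk g f =>
      obtain ⟨ha, hp'⟩ := hp
      rw [subtree_cons, dif_pos ha] at h1
      have := ih hp' h1
      calc (a :: r').length = r'.length + 1 := by simp
        _ < height (f ⟨a, ha⟩) + 1 := by omega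
        _ ≤ height (⟨g, f⟩ : Tree ar) := by
            rw [height_mk]
            exact Finset.le_sup (f := fun i => height (f i) + 1) (Finset.mem_univ (⟨a, ha⟩ : Fin (ar g)))

end Paper

namespace Paper

variable {Γ Sg : Type} {arΓ : Γ → ℕ} {arSg : Sg → ℕ}

/-- Decomposition of a position of `ψ̂ s` into an embedded position of `s` and a
position inside the image of a single symbol. -/
def isDecomp (ψ : ∀ g : Γ, TreeX arSg (arΓ g)) (s : Tree arΓ) (x v r : List ℕ) : Prop :=
  okE ψ s v ∧ x = emb (occ ψ) s v ++ r ∧ inPos (ψ (root (subtree s v))) r ∧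
    ∃ d, root (subtree (ψ (root (subtree s v))) r) = Sum.inl d

lemma leaf_not_prefix_region {k : ℕ} {e : TreeX arSg k} {π r : List ℕ} {i : Fin k}
    (hv : isVarPos e π i) (hr : inPos e r) {d : Sg}
    (hroot : root (subtree e r) = Sum.inl d) : ¬ (π <+: r) := by
  rintro ⟨z, rfl⟩
  have hz : z = [] := arity_zero_append hr (by rw [hv.2]; rfl)
  subst hz
  rw [List.append_nil] at hroot
  rw [hv.2] at hroot
  exact absurd hroot (by simp)

lemma decomp_exists {ψ : ∀ g : Γ, TreeX arSg (arΓ g)} (hlin : Linear ψ) :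
    ∀ (s : Tree arΓ) (x : List ℕ), inPos (applyHom ψ s) x → ∃ v r, isDecomp ψ s x v r := by
  intro s
  induction s with
  | mk g f ihs =>
    intro x hx
    rw [applyHom_mk] at hx
    rcases pos_split _ (ψ g) x hx with ⟨hp, d, hd⟩ | ⟨i, π, y, hv, rfl, hy⟩
    · refine ⟨[], x, okE_nil _ _, by rw [emb_nil, List.nil_append], ?_, d, ?_⟩
      · rw [subtree_nil, root_mk]; exact hp
      · rw [subtree_nil, root_mk]; exact hd
    · obtain ⟨v', r, hok', hxe, hpr, d, hd⟩ := ihs i y hy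
      have hvp : isVarPos (ψ g) π ⟨(i : ℕ), i.isLt⟩ := by
        rw [Fin.eta]; exact hv
      have hπ : π = occ ψ g i := occ_eq_of_linear hlin g i.isLt hvp
      refine ⟨(i : ℕ) :: v', r, ⟨i.isLt, ⟨π, hvp⟩, by rw [Fin.eta]; exact hok'⟩, ?_, ?_, d, ?_⟩
      · rw [emb_cons (occ ψ) f i.isLt, Fin.eta, hxe, ← hπ, List.append_assoc]
      · rw [subtree_cons, dif_pos i.isLt, Fin.eta]; exact hpr
      · rw [subtree_cons, dif_pos i.isLt, Fin.eta]; exact hd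

lemma decomp_compare {ψ : ∀ g : Γ, TreeX arSg (arΓ g)} :
    ∀ {V v : List ℕ} {s : Tree arΓ} {x r : List ℕ},
      isDecomp ψ s x v r → okE ψ s V → emb (occ ψ) s V <+: x → V <+: v := by
  intro V
  induction V with
  | nil => intro v s x r _ _ _; exact List.nil_prefix
  | cons e V' ih =>
    intro v s x r hd hok hpre
    cases s with
    | mk g f =>
      obtain ⟨hie, hexe, hokV'⟩ := hok
      obtain ⟨hokv, hxe, hposr, d, hroot⟩ := hd
      rw [emb_cons (occ ψ) f hie] at hpre
      cases v with
      | nil =>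
        exfalso
        rw [emb_nil, List.nil_append] at hxe
        subst hxe
        have hoccr : occ ψ g e <+: x :=
          (List.prefix_append (occ ψ g e) _).trans hpre
        rw [subtree_nil, root_mk] at hposr hroot
        exact leaf_not_prefix_region (occ_spec ψ g hie hexe) hposr hroot hoccr
      | cons k v'' =>
        obtain ⟨hik, hexk, hokv''⟩ := hokv
        rw [emb_cons (occ ψ) f hik, List.append_assoc] at hxe
        subst hxe
        by_cases hek : e = k
        · subst hek
          have hpre' : emb (occ ψ) (f ⟨e, hik⟩) V' <+:
              emb (occ ψ) (f ⟨e, hik⟩) v'' ++ r :=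
            (List.prefix_append_right_inj (occ ψ g e)).1 hpre
          have hd' : isDecomp ψ (f ⟨e, hik⟩) (emb (occ ψ) (f ⟨e, hik⟩) v'' ++ r) v'' r := by
            refine ⟨hokv'', rfl, ?_, d, ?_⟩
            · rw [subtree_cons, dif_pos hik] at hposr; exact hposr
            · rw [subtree_cons, dif_pos hik] at hroot; exact hroot
          exact List.cons_prefix_cons.2 ⟨rfl, ih hd' hokV' hpre'⟩
        · exfalso
          have h1 : occ ψ g e <+: occ ψ g k ++ (emb (occ ψ) (f ⟨k, hik⟩) v'' ++ r) :=
            (List.prefix_append (occ ψ g e) _).trans hpre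
          have h2 : occ ψ g k <+: occ ψ g k ++ (emb (occ ψ) (f ⟨k, hik⟩) v'' ++ r) := ⟨_, rfl⟩
          have hne : (⟨e, hie⟩ : Fin (arΓ g)) ≠ ⟨k, hik⟩ := fun hh => hek (congrArg Fin.val hh)
          rcases List.prefix_or_prefix_of_prefix h1 h2 with h | h
          · exact isVarPos_not_prefix (occ_spec ψ g hie hexe) (occ_spec ψ g hik hexk) hne h
          · exact isVarPos_not_prefix (occ_spec ψ g hik hexk) (occ_spec ψ g hie hexe)
              hne.symm h

lemma exit {ψ : ∀ g : Γ, TreeX arSg (arΓ g)} :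
    ∀ {v : List ℕ} {s : Tree arΓ} {V x r : List ℕ} {i : ℕ},
      isDecomp ψ s x v r → okE ψ s V → (x ++ [i]) <+: emb (occ ψ) s V →
      ∃ e, v ++ [e] <+: V ∧ r ++ [i] <+: occ ψ (root (subtree s v)) e := by
  intro v
  induction v with
  | nil =>
    intro s V x r i hd hok hpre
    obtain ⟨_, hxe, hposr, d, hroot⟩ := hd
    rw [emb_nil, List.nil_append] at hxe
    subst hxe
    cases V with
    | nil =>
      exfalso
      rw [emb_nil] at hpre
      simpa using List.prefix_nil.1 hpre
    | cons e V' =>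
      cases s with
      | mk g f =>
        obtain ⟨hie, hexe, hokV'⟩ := hok
        rw [emb_cons (occ ψ) f hie] at hpre
        rw [subtree_nil, root_mk] at hposr hroot ⊢
        have hocc := occ_spec ψ g hie hexe
        have h2 : occ ψ g e <+: occ ψ g e ++ emb (occ ψ) (f ⟨e, hie⟩) V' := ⟨_, rfl⟩
        have hfin : x ++ [i] <+: occ ψ g e := by
          rcases List.prefix_or_prefix_of_prefix hpre h2 with h | h
          · exact h
          · -- occ ψ g e <+: x ++ [i]
            by_cases hlen : (occ ψ g e).length ≤ x.length
            · exfalso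
              have hox : occ ψ g e <+: x :=
                List.prefix_of_prefix_length_le h ⟨[i], rfl⟩ hlen
              exact leaf_not_prefix_region hocc hposr hroot hox
            · have hlen2 : (occ ψ g e).length = (x ++ [i]).length := by
                have := h.length_le
                simp only [List.length_append, List.length_cons, List.length_nil] at this ⊢
                omega
              rw [h.eq_of_length hlen2]
        exact ⟨e, ⟨V', rfl⟩, hfin⟩
  | cons k v'' ih =>
    intro s V x r i hd hok hpre
    cases s with
    | mk g f =>
      obtain ⟨⟨hik, hexk, hokv''⟩, hxe, hposr, d, hroot⟩ := hd
      rw [emb_cons (occ ψ) f hik, List.append_assoc] at hxe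
      subst hxe
      cases V with
      | nil =>
        exfalso
        rw [emb_nil] at hpre
        simpa using List.prefix_nil.1 hpre
      | cons e V' =>
        obtain ⟨hie, hexe, hokV'⟩ := hok
        rw [emb_cons (occ ψ) f hie] at hpre
        by_cases hek : e = k
        · subst hek
          have hpre' : (emb (occ ψ) (f ⟨e, hik⟩) v'' ++ r) ++ [i] <+:
              emb (occ ψ) (f ⟨e, hik⟩) V' := by
            apply (List.prefix_append_right_inj (occ ψ g e)).1
            rw [List.append_assoc] at hpre
            exact hpre
          have hd' : isDecomp ψ (f ⟨e, hik⟩) (emb (occ ψ) (f ⟨e, hik⟩) v'' ++ r) v'' r := by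
            refine ⟨hokv'', rfl, ?_, d, ?_⟩
            · rw [subtree_cons, dif_pos hik] at hposr; exact hposr
            · rw [subtree_cons, dif_pos hik] at hroot; exact hroot
          obtain ⟨e', h1, h2⟩ := ih hd' hokV' hpre'
          refine ⟨e', ?_, ?_⟩
          · rw [List.cons_append]
            exact List.cons_prefix_cons.2 ⟨rfl, h1⟩
          · rw [subtree_cons, dif_pos hik]
            exact h2
        · exfalso
          have h1 : occ ψ g e <+: occ ψ g e ++ emb (occ ψ) (f ⟨e, hie⟩) V' := ⟨_, rfl⟩
          have h2 : occ ψ g k <+: occ ψ g e ++ emb (occ ψ) (f ⟨e, hie⟩) V' := by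
            refine List.IsPrefix.trans ?_ hpre
            exact List.IsPrefix.trans (List.prefix_append _ _) ⟨[i], rfl⟩
          have hne : (⟨e, hie⟩ : Fin (arΓ g)) ≠ ⟨k, hik⟩ := fun hh => hek (congrArg Fin.val hh)
          rcases List.prefix_or_prefix_of_prefix h1 h2 with h | h
          · exact isVarPos_not_prefix (occ_spec ψ g hie hexe) (occ_spec ψ g hik hexk) hne h
          · exact isVarPos_not_prefix (occ_spec ψ g hik hexk) (occ_spec ψ g hie hexe)
              hne.symm h

end Paper

namespace Paper

section GenericSnoc

variable {Γ : Type} {ar : Γ → ℕ}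

lemma inPos_snoc_lt {s : Tree ar} {v : List ℕ} {e : ℕ} (h : inPos s (v ++ [e])) :
    e < ar (root (subtree s v)) := by
  have hv : inPos s v := inPos_prefix ⟨[e], rfl⟩ h
  have h2 := (inPos_append hv).1 h
  cases hs : subtree s v with
  | mk g' f' =>
    rw [hs] at h2
    rw [root_mk]
    exact h2.choose

end GenericSnoc

variable {Γ Δ : Type} {arΓ : Γ → ℕ} {arΔ : Δ → ℕ}

lemma emb_snoc (O : (g : Γ) → ℕ → List ℕ) {s : Tree arΓ} {v : List ℕ} {e : ℕ}
    (hv : inPos s v) (he : e < arΓ (root (subtree s v))) :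
    emb O s (v ++ [e]) = emb O s v ++ O (root (subtree s v)) e := by
  rw [emb_append O [e] hv]
  congr 1
  cases hs : subtree s v with
  | mk g' f' =>
    rw [hs, root_mk] at he
    rw [root_mk]
    exact emb_singleton O f' he

lemma subtree_applyHom_inl {φ : ∀ g : Γ, TreeX arΔ (arΓ g)} {s : Tree arΓ} {v c : List ℕ}
    (hok : okE φ s v) (hc : inPos (φ (root (subtree s v))) c) {dd : Δ}
    (hrt : root (subtree (φ (root (subtree s v))) c) = Sum.inl dd) :
    inPos (applyHom φ s) (emb (occ φ) s v ++ c) ∧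
      root (subtree (applyHom φ s) (emb (occ φ) s v ++ c)) = dd := by
  obtain ⟨hpos_emb, hsub⟩ := emb_main φ hok
  constructor
  · rw [inPos_append hpos_emb, hsub]
    cases hs : subtree s v with
    | mk g' f' =>
      rw [hs, root_mk] at hc
      rw [applyHom_mk]
      exact subst_inPos _ _ _ hc
  · rw [subtree_append hpos_emb, hsub]
    cases hs : subtree s v with
    | mk g' f' =>
      rw [hs, root_mk] at hc hrt
      rw [applyHom_mk, subst_subtree _ _ _ hc]
      cases ht : subtree (φ g') c with
      | mk ge fe =>
        rw [ht, root_mk] at hrt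
        cases ge with
        | inl d' =>
          have : d' = dd := by simpa using hrt
          subst this
          rw [subst_mk_inl, root_mk]
        | inr ii => simp at hrt

lemma decomp_root {ψ : ∀ g : Γ, TreeX arΔ (arΓ g)} {s : Tree arΓ} {x v r : List ℕ}
    (hd : isDecomp ψ s x v r) :
    ∃ d, root (subtree (ψ (root (subtree s v))) r) = Sum.inl d ∧
      root (subtree (applyHom ψ s) x) = d ∧ inPos (applyHom ψ s) x := by
  obtain ⟨hok, hxe, hposr, d, hroot⟩ := hd
  subst hxe
  obtain ⟨h1, h2⟩ := subtree_applyHom_inl hok hposr hroot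
  exact ⟨d, hroot, h2, h1⟩

lemma decomp_x_length {ψ : ∀ g : Γ, TreeX arΔ (arΓ g)} {ℓ : ℕ}
    (hh : ∀ γ, height (ψ γ) < ℓ) {s : Tree arΓ} {x v r : List ℕ}
    (hd : isDecomp ψ s x v r)
    (hbr : 2 ≤ arΔ (root (subtree (applyHom ψ s) x))) :
    (emb (occ ψ) s v).length ≤ x.length ∧
      x.length + 1 < (emb (occ ψ) s v).length + ℓ := by
  obtain ⟨d, hroot, hrootx, _⟩ := decomp_root hd
  have h2 : 2 ≤ arΔ d := hrootx ▸ hbr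
  have h1 : 1 ≤ extAr arΔ _ (root (subtree (ψ (root (subtree s v))) r)) := by
    rw [hroot, extAr_inl]; omega
  have hlen := length_lt_height hd.2.2.1 h1
  have hht := hh (root (subtree s v))
  obtain ⟨_, hxe, _⟩ := hd
  rw [hxe, List.length_append]
  omega

lemma mkBranchPoint {φ : ∀ g : Γ, TreeX arΔ (arΓ g)} (hφ : Complete φ) {s : Tree arΓ}
    {v : List ℕ} {e₁ e₂ : ℕ} (hne : e₁ ≠ e₂)
    (h₁ : inPos s (v ++ [e₁])) (h₂ : inPos s (v ++ [e₂])) :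
    ∃ P α β, (P, α, β) ∈ branch (applyHom φ s) ∧ emb (occ φ) s v <+: P ∧
      P ++ [α] <+: emb (occ φ) s (v ++ [e₁]) ∧ P ++ [β] <+: emb (occ φ) s (v ++ [e₂]) := by
  have hv : inPos s v := inPos_prefix ⟨[e₁], rfl⟩ h₁
  have he₁ : e₁ < arΓ (root (subtree s v)) := inPos_snoc_lt h₁
  have he₂ : e₂ < arΓ (root (subtree s v)) := inPos_snoc_lt h₂
  have hocc₁ : isVarPos (φ (root (subtree s v))) (occ φ (root (subtree s v)) e₁) ⟨e₁, he₁⟩ :=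
    occ_spec φ _ he₁ (isVarPos_of_count _ _ (hφ _ ⟨e₁, he₁⟩))
  have hocc₂ : isVarPos (φ (root (subtree s v))) (occ φ (root (subtree s v)) e₂) ⟨e₂, he₂⟩ :=
    occ_spec φ _ he₂ (isVarPos_of_count _ _ (hφ _ ⟨e₂, he₂⟩))
  have hne' : (⟨e₁, he₁⟩ : Fin (arΓ (root (subtree s v)))) ≠ ⟨e₂, he₂⟩ :=
    fun hh => hne (congrArg Fin.val hh)
  obtain ⟨α, β, hαβ, hα, hβ⟩ := lcp_div _ _
    (isVarPos_not_prefix hocc₁ hocc₂ hne') (isVarPos_not_prefix hocc₂ hocc₁ hne'.symm)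
  set c := lcp (occ φ (root (subtree s v)) e₁) (occ φ (root (subtree s v)) e₂) with hcdef
  have hcα : inPos (φ (root (subtree s v))) (c ++ [α]) := inPos_prefix hα hocc₁.1
  have hcβ : inPos (φ (root (subtree s v))) (c ++ [β]) := inPos_prefix hβ hocc₂.1
  have hc : inPos (φ (root (subtree s v))) c := inPos_prefix ⟨[α], rfl⟩ hcα
  have hα' : α < extAr arΔ _ (root (subtree (φ (root (subtree s v))) c)) := inPos_snoc_lt hcα
  have hβ' : β < extAr arΔ _ (root (subtree (φ (root (subtree s v))) c)) := inPos_snoc_lt hcβ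
  cases hrt : root (subtree (φ (root (subtree s v))) c) with
  | inr ii =>
    rw [hrt] at hα'
    simp [extAr] at hα'
  | inl dd =>
    rw [hrt, extAr_inl] at hα' hβ'
    have hokv : okE φ s v := okE_of_complete hφ hv
    obtain ⟨hPpos, hProot⟩ := subtree_applyHom_inl hokv hc hrt
    refine ⟨emb (occ φ) s v ++ c, α, β, ?_, List.prefix_append _ _, ?_, ?_⟩
    · refine ⟨hPpos, ?_, ?_, ?_, hαβ⟩
      · rw [hProot]; omega
      · rw [hProot]; exact hα'
      · rw [hProot]; exact hβ'
    · rw [emb_snoc (occ φ) hv he₁, List.append_assoc]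
      exact (List.prefix_append_right_inj _).2 hα
    · rw [emb_snoc (occ φ) hv he₂, List.append_assoc]
      exact (List.prefix_append_right_inj _).2 hβ

end Paper

namespace Paper

lemma mkSSP {Γ' : Type} {ar' : Γ' → ℕ} {ℓ n : ℕ} (hl : 1 ≤ ℓ) {u : Tree ar'}
    {P : List ℕ} {α β : ℕ} (hbr : (P, α, β) ∈ branch u)
    (hα : ∀ n', n = n' + 1 → ∃ B, ℓ ^ n ≤ (chainSet ℓ n' u (P ++ [α]) B).ncard)
    (hβ : ∀ n', n = n' + 1 → ∃ B, ℓ ^ n ≤ (chainSet ℓ n' u (P ++ [β]) B).ncard) :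
    (P, α, β) ∈ SSP ℓ n u := by
  cases n with
  | zero => exact hbr
  | succ n' => exact (mem_SSP_succ_iff hl).2 ⟨hbr, hα n' rfl, hβ n' rfl⟩

section Main

variable {Γ Sg Δ : Type} {arΓ : Γ → ℕ} {arSg : Sg → ℕ} {arΔ : Δ → ℕ}
variable {ψ : ∀ g : Γ, TreeX arSg (arΓ g)} {φ : ∀ g : Γ, TreeX arΔ (arΓ g)}
variable {ℓ : ℕ} {s : Tree arΓ}

lemma origins (hψ : Linear ψ) (hℓ : ∀ γ, height (ψ γ) < ℓ) (hl : 1 ≤ ℓ)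
    {k m : ℕ} {a b : List ℕ} (hm : 1 ≤ m)
    (hc : ℓ * m ≤ (chainSet ℓ k (applyHom ψ s) a b).ncard) :
    ∃ L : List (List ℕ), m ≤ L.length ∧ L ≠ [] ∧
      L.Pairwise (fun x y => x <+: y ∧ x ≠ y) ∧
      ∀ v ∈ L, (a <+: emb (occ ψ) s v) ∧ ∃ x r, isDecomp ψ s x v r ∧
        x ∈ chainSet ℓ k (applyHom ψ s) a b := by
  classical
  have hfin := chainSet_finite ℓ k (applyHom ψ s) a b
  set F := hfin.toFinset with hF
  have hcard : ℓ * m ≤ F.card := by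
    rwa [Set.ncard_eq_toFinset_card _ hfin] at hc
  have hmemF : ∀ x ∈ F, x ∈ chainSet ℓ k (applyHom ψ s) a b := fun x hx =>
    (Set.Finite.mem_toFinset hfin).1 hx
  have hdec : ∀ x ∈ F, ∃ p : List ℕ × List ℕ, isDecomp ψ s x p.1 p.2 := by
    intro x hx
    obtain ⟨v, r, hd⟩ := decomp_exists hψ s x (SP_pos (hmemF x hx).2.2)
    exact ⟨(v, r), hd⟩
  set DV : List ℕ → List ℕ × List ℕ := fun x =>
    if h : ∃ p : List ℕ × List ℕ, isDecomp ψ s x p.1 p.2 then h.choose else ([], []) with hDV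
  have hDVspec : ∀ x ∈ F, isDecomp ψ s x (DV x).1 (DV x).2 := by
    intro x hx
    have h := hdec x hx
    rw [hDV]
    simp only [dif_pos h]
    exact h.choose_spec
  have hcomp : ∀ x ∈ F, ∀ y ∈ F, x <+: y ∨ y <+: x := fun x hx y hy =>
    List.prefix_or_prefix_of_prefix (hmemF x hx).2.1 (hmemF y hy).2.1
  set O := F.image (fun x => (DV x).1) with hO
  have hembpre : ∀ x ∈ F, emb (occ ψ) s (DV x).1 <+: x := by
    intro x hx
    exact ⟨(DV x).2, ((hDVspec x hx).2.1).symm⟩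
  have hfib : ∀ v ∈ O, (F.filter fun x => (DV x).1 = v).card ≤ ℓ - 1 := by
    intro v hv
    have hsub : (F.filter fun x => (DV x).1 = v).card ≤
        (Finset.Ico (emb (occ ψ) s v).length ((emb (occ ψ) s v).length + (ℓ - 1))).card := by
      apply Finset.card_le_card_of_injOn List.length
      · intro x hx
        rw [Finset.mem_coe, Finset.mem_filter] at hx
        obtain ⟨hxF, hxv⟩ := hx
        have hd := hDVspec x hxF
        rw [hxv] at hd
        obtain ⟨i', j', hbr⟩ := SP_branch (hmemF x hxF).2.2
        have h2 : 2 ≤ arSg (root (subtree (applyHom ψ s) x)) := hbr.2.1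
        have hlen := decomp_x_length hℓ hd h2
        rw [Finset.mem_coe, Finset.mem_Ico]
        omega
      · intro x hx y hy hxy
        rw [Finset.mem_coe, Finset.mem_filter] at hx hy
        rcases hcomp x hx.1 y hy.1 with h | h
        · exact h.eq_of_length hxy
        · exact (h.eq_of_length hxy.symm).symm
    rwa [Nat.card_Ico, Nat.add_sub_cancel_left] at hsub
  have hFO : F.card ≤ (ℓ - 1) * O.card :=
    Finset.card_le_mul_card_image F (ℓ - 1) hfib
  have hOcard : m + 1 ≤ O.card := by
    by_contra hlt
    push_neg at hlt
    have h1 : O.card ≤ m := by omega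
    have h2 : ℓ * m ≤ (ℓ - 1) * m :=
      le_trans hcard (le_trans hFO (Nat.mul_le_mul_left _ h1))
    have h3 : (ℓ - 1) * m = ℓ * m - m := by
      rw [Nat.sub_mul, Nat.one_mul]
    have h4 : m ≤ ℓ * m := Nat.le_mul_of_pos_left m (by omega)
    omega
  have hOcomp : ∀ v₁ ∈ O, ∀ v₂ ∈ O, v₁ <+: v₂ ∨ v₂ <+: v₁ := by
    intro v₁ hv₁ v₂ hv₂
    rw [hO, Finset.mem_image] at hv₁ hv₂
    obtain ⟨x₁, hx₁, rfl⟩ := hv₁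
    obtain ⟨x₂, hx₂, rfl⟩ := hv₂
    rcases hcomp x₁ hx₁ x₂ hx₂ with h | h
    · exact Or.inl (decomp_compare (hDVspec x₂ hx₂) (hDVspec x₁ hx₁).1
        ((hembpre x₁ hx₁).trans h))
    · exact Or.inr (decomp_compare (hDVspec x₁ hx₁) (hDVspec x₂ hx₂).1
        ((hembpre x₂ hx₂).trans h))
  set O' := O.filter (fun v => a <+: emb (occ ψ) s v) with hO'
  have hrep : ∀ v ∈ O, ∃ x ∈ F, (DV x).1 = v := by
    intro v hv
    rw [hO, Finset.mem_image] at hv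
    obtain ⟨x, hx, he⟩ := hv
    exact ⟨x, hx, he⟩
  have hOf : (O.filter (fun v => ¬ a <+: emb (occ ψ) s v)).card ≤ 1 := by
    rw [Finset.card_le_one]
    intro v₁ hv₁ v₂ hv₂
    rw [Finset.mem_filter] at hv₁ hv₂
    obtain ⟨x₁, hx₁, he₁⟩ := hrep v₁ hv₁.1
    obtain ⟨x₂, hx₂, he₂⟩ := hrep v₂ hv₂.1
    have hpre : ∀ (v : List ℕ) (x : List ℕ), x ∈ F → (DV x).1 = v →
        ¬ a <+: emb (occ ψ) s v → emb (occ ψ) s v <+: a := by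
      intro v x hx he hna
      have h1 : emb (occ ψ) s v <+: x := he ▸ hembpre x hx
      have h2 : a <+: x := (hmemF x hx).1
      rcases List.prefix_or_prefix_of_prefix h1 h2 with h | h
      · exact h
      · exact absurd h hna
    have hpre₁ := hpre v₁ x₁ hx₁ he₁ hv₁.2
    have hpre₂ := hpre v₂ x₂ hx₂ he₂ hv₂.2
    have hc₁ : v₂ <+: v₁ := by
      have hdx := hDVspec x₁ hx₁
      rw [he₁] at hdx
      have hokv₂ : okE ψ s v₂ := by
        have := hDVspec x₂ hx₂; rw [he₂] at this; exact this.1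
      exact decomp_compare hdx hokv₂ (hpre₂.trans (hmemF x₁ hx₁).1)
    have hc₂ : v₁ <+: v₂ := by
      have hdx := hDVspec x₂ hx₂
      rw [he₂] at hdx
      have hokv₁ : okE ψ s v₁ := by
        have := hDVspec x₁ hx₁; rw [he₁] at this; exact this.1
      exact decomp_compare hdx hokv₁ (hpre₁.trans (hmemF x₂ hx₂).1)
    exact prefix_antisymm hc₂ hc₁
  have hsplit := Finset.card_filter_add_card_filter_not
    (s := O) (p := fun v => a <+: emb (occ ψ) s v)
  have hO'card : m ≤ O'.card := by
    rw [hO']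
    omega
  obtain ⟨L, hLlen, hLmem, hLpw⟩ := sortChain O' (fun x hx y hy =>
    hOcomp x (Finset.mem_of_mem_filter x hx) y (Finset.mem_of_mem_filter y hy))
  refine ⟨L, by omega, ?_, hLpw, ?_⟩
  · intro hnil
    rw [hnil] at hLlen
    simp at hLlen
    omega
  · intro v hvL
    have hvO' := (hLmem v).1 hvL
    rw [hO', Finset.mem_filter] at hvO'
    obtain ⟨hvO, hpa⟩ := hvO'
    refine ⟨hpa, ?_⟩
    obtain ⟨x, hx, hxv⟩ := hrep v hvO
    have hd := hDVspec x hx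
    rw [hxv] at hd
    exact ⟨x, (DV x).2, hd, hmemF x hx⟩

end Main

end Paper

namespace Paper

section Main2

variable {Γ Sg Δ : Type} {arΓ : Γ → ℕ} {arSg : Sg → ℕ} {arΔ : Δ → ℕ}

/-- The key inductive statement: a chain of `ℓ·m` spine positions of level `n+1` in `ψ̂ s`
yields a chain of `m` spine positions of level `n` in `φ̂ s`. -/
def KeyStmt (ψ : ∀ g : Γ, TreeX arSg (arΓ g)) (φ : ∀ g : Γ, TreeX arΔ (arΓ g))
    (ℓ : ℕ) (s : Tree arΓ) (n : ℕ) : Prop :=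
  ∀ a b m : _, 1 ≤ m → ℓ * m ≤ (chainSet ℓ (n+1) (applyHom ψ s) a b).ncard →
    ∃ V B, okE ψ s V ∧ a <+: emb (occ ψ) s V ∧
      m ≤ (chainSet ℓ n (applyHom φ s) (emb (occ φ) s V) B).ncard

variable {ψ : ∀ g : Γ, TreeX arSg (arΓ g)} {φ : ∀ g : Γ, TreeX arΔ (arΓ g)}
variable {ℓ : ℕ} {s : Tree arΓ}

lemma sidewit (hψ : Linear ψ) (hℓ : ∀ γ, height (ψ γ) < ℓ) (hl : 1 ≤ ℓ) (n : ℕ)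
    (hk : ∀ n', n = n' + 1 → KeyStmt ψ φ ℓ s n')
    {a' b' : List ℕ} (hc : ℓ ^ (n+1) ≤ (chainSet ℓ n (applyHom ψ s) a' b').ncard) :
    ∃ V, okE ψ s V ∧ a' <+: emb (occ ψ) s V ∧
      ∀ n', n = n' + 1 →
        ∃ B, ℓ ^ n ≤ (chainSet ℓ n' (applyHom φ s) (emb (occ φ) s V) B).ncard := by
  cases n with
  | zero =>
    have hc' : ℓ * 1 ≤ (chainSet ℓ 0 (applyHom ψ s) a' b').ncard := by
      rw [Nat.mul_one]
      calc ℓ = ℓ ^ 1 := (pow_one ℓ).symm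
        _ ≤ _ := hc
    obtain ⟨L, hLlen, hLne, _, hLall⟩ := origins hψ hℓ hl (le_refl 1) hc'
    obtain ⟨v, hv⟩ := List.exists_mem_of_ne_nil L hLne
    obtain ⟨hpa, x, r, hd, _⟩ := hLall v hv
    exact ⟨v, hd.1, hpa, fun n' h => absurd h (by omega)⟩
  | succ n' =>
    have hkey := hk n' rfl
    have hc' : ℓ * ℓ ^ (n' + 1) ≤ (chainSet ℓ (n'+1) (applyHom ψ s) a' b').ncard := by
      calc ℓ * ℓ ^ (n' + 1) = ℓ ^ (n' + 2) := (pow_succ' ℓ (n'+1)).symm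
        _ ≤ _ := hc
    obtain ⟨V, B, hok, hpa, hcount⟩ := hkey a' b' (ℓ ^ (n'+1)) (Nat.one_le_pow _ _ hl) hc'
    refine ⟨V, hok, hpa, ?_⟩
    intro n'' h
    have : n'' = n' := by omega
    subst this
    exact ⟨B, hcount⟩

lemma repSides (hψ : Linear ψ) (hφ : Complete φ) (hℓ : ∀ γ, height (ψ γ) < ℓ)
    (hl : 1 ≤ ℓ) (n : ℕ) (hk : ∀ n', n = n' + 1 → KeyStmt ψ φ ℓ s n')
    {v x r : List ℕ} (hd : isDecomp ψ s x v r)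
    (hsp : x ∈ SP ℓ (n+1) (applyHom ψ s)) :
    ∃ e₁ e₂, e₁ ≠ e₂ ∧ inPos s (v ++ [e₁]) ∧ inPos s (v ++ [e₂]) ∧
      (∀ n', n = n' + 1 → ∃ B,
        ℓ ^ n ≤ (chainSet ℓ n' (applyHom φ s) (emb (occ φ) s (v ++ [e₁])) B).ncard) ∧
      (∀ n', n = n' + 1 → ∃ B,
        ℓ ^ n ≤ (chainSet ℓ n' (applyHom φ s) (emb (occ φ) s (v ++ [e₂])) B).ncard) := by
  obtain ⟨i, j, hssp⟩ := hsp
  have hbr := SSP_subset_branch hssp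
  obtain ⟨_, hs1, hs2⟩ := (mem_SSP_succ_iff hl).1 hssp
  obtain ⟨b₁, hc₁⟩ := hs1
  obtain ⟨b₂, hc₂⟩ := hs2
  obtain ⟨V₁, hok₁, hpa₁, hch₁⟩ := sidewit hψ hℓ hl n hk hc₁
  obtain ⟨V₂, hok₂, hpa₂, hch₂⟩ := sidewit hψ hℓ hl n hk hc₂
  obtain ⟨e₁, hpre₁, hocc₁⟩ := exit hd hok₁ hpa₁
  obtain ⟨e₂, hpre₂, hocc₂⟩ := exit hd hok₂ hpa₂
  have hne : e₁ ≠ e₂ := by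
    intro he
    subst he
    have heq : r ++ [i] = r ++ [j] := by
      rcases List.prefix_or_prefix_of_prefix hocc₁ hocc₂ with h | h
      · exact h.eq_of_length (by simp)
      · exact (h.eq_of_length (by simp)).symm
    have hij : i = j := by simpa using heq
    exact hbr.2.2.2.2 hij
  have hv1 : inPos s (v ++ [e₁]) := inPos_prefix hpre₁ (okE_inPos hok₁)
  have hv2 : inPos s (v ++ [e₂]) := inPos_prefix hpre₂ (okE_inPos hok₂)
  refine ⟨e₁, e₂, hne, hv1, hv2, ?_, ?_⟩
  · intro n' hn
    obtain ⟨B, hB⟩ := hch₁ n' hn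
    refine ⟨B, le_trans hB (Set.ncard_le_ncard ?_ (chainSet_finite _ _ _ _ _))⟩
    exact chainSet_mono_left (emb_prefix (occ φ) hv1 hpre₁)
  · intro n' hn
    obtain ⟨B, hB⟩ := hch₂ n' hn
    refine ⟨B, le_trans hB (Set.ncard_le_ncard ?_ (chainSet_finite _ _ _ _ _))⟩
    exact chainSet_mono_left (emb_prefix (occ φ) hv2 hpre₂)

end Main2

end Paper

namespace Paper

section Main3

variable {Γ Sg Δ : Type} {arΓ : Γ → ℕ} {arSg : Sg → ℕ} {arΔ : Δ → ℕ}
variable {ψ : ∀ g : Γ, TreeX arSg (arΓ g)} {φ : ∀ g : Γ, TreeX arΔ (arΓ g)}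
variable {ℓ : ℕ} {s : Tree arΓ}

lemma build (hψ : Linear ψ) (hφ : Complete φ) (hℓ : ∀ γ, height (ψ γ) < ℓ)
    (hl : 1 ≤ ℓ) (n : ℕ) (hk : ∀ n', n = n' + 1 → KeyStmt ψ φ ℓ s n') :
    ∀ (L : List (List ℕ)) (v : List ℕ),
      (∀ w ∈ v :: L, ∃ x r, isDecomp ψ s x w r ∧ x ∈ SP ℓ (n+1) (applyHom ψ s)) →
      (v :: L).Pairwise (fun x y => x <+: y ∧ x ≠ y) →
      ∃ B vl A_t, vl ∈ v :: L ∧ (∀ w ∈ v :: L, w <+: vl) ∧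
        emb (occ φ) s vl <+: A_t ∧
        (∀ n', n = n' + 1 →
          ∃ B_t, ℓ ^ n ≤ (chainSet ℓ n' (applyHom φ s) A_t B_t).ncard) ∧
        (v :: L).length ≤ (chainSet ℓ n (applyHom φ s) (emb (occ φ) s v) B).ncard := by
  intro L
  induction L with
  | nil =>
    intro v hall hpw
    obtain ⟨x, r, hd, hsp⟩ := hall v (List.mem_cons_self)
    obtain ⟨e₁, e₂, hne, hv1, hv2, hch₁, hch₂⟩ := repSides hψ hφ hℓ hl n hk hd hsp
    obtain ⟨P, α, β, hbr, hembP, hPα, hPβ⟩ := mkBranchPoint hφ hne hv1 hv2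
    have hPSP : P ∈ SP ℓ n (applyHom φ s) := by
      refine ⟨α, β, mkSSP hl hbr ?_ ?_⟩
      · intro n' hn
        obtain ⟨B, hB⟩ := hch₁ n' hn
        exact ⟨B, le_trans hB (Set.ncard_le_ncard (chainSet_mono_left hPα)
          (chainSet_finite _ _ _ _ _))⟩
      · intro n' hn
        obtain ⟨B, hB⟩ := hch₂ n' hn
        exact ⟨B, le_trans hB (Set.ncard_le_ncard (chainSet_mono_left hPβ)
          (chainSet_finite _ _ _ _ _))⟩
    have hvpos : inPos s v := inPos_prefix ⟨[e₁], rfl⟩ hv1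
    have hPin : P ∈ chainSet ℓ n (applyHom φ s) (emb (occ φ) s v) P :=
      ⟨hembP, List.prefix_rfl, hPSP⟩
    refine ⟨P, v, emb (occ φ) s (v ++ [e₁]), List.mem_cons_self, ?_, ?_, hch₁, ?_⟩
    · intro w hw
      rcases List.mem_cons.1 hw with rfl | hw'
      · exact List.prefix_rfl
      · simp at hw'
    · exact emb_prefix _ hvpos ⟨[e₁], rfl⟩
    · have h1 : 0 < (chainSet ℓ n (applyHom φ s) (emb (occ φ) s v) P).ncard :=
        (Set.ncard_pos (chainSet_finite _ _ _ _ _)).2 ⟨P, hPin⟩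
      exact h1
  | cons v' L'' ih =>
    intro v hall hpw
    have hpw' := hpw.of_cons
    have hall' : ∀ w ∈ v' :: L'', ∃ x r, isDecomp ψ s x w r ∧
        x ∈ SP ℓ (n+1) (applyHom ψ s) := fun w hw => hall w (List.mem_cons_of_mem v hw)
    obtain ⟨B', vl, A_t, hvlmem, hvlall, hembvlA, htail, hcount'⟩ := ih v' hall' hpw'
    obtain ⟨x, r, hd, hsp⟩ := hall v (List.mem_cons_self)
    obtain ⟨e₁, e₂, hne, hv1, hv2, hch₁, hch₂⟩ := repSides hψ hφ hℓ hl n hk hd hsp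
    have hvv' : v <+: v' ∧ v ≠ v' := (List.pairwise_cons.1 hpw).1 v' (List.mem_cons_self)
    obtain ⟨d, hd_pre⟩ := prefix_step hvv'.1 hvv'.2
    have hv' : inPos s v' := by
      obtain ⟨x', r', hd', _⟩ := hall' v' (List.mem_cons_self)
      exact okE_inPos hd'.1
    have hvd : inPos s (v ++ [d]) := inPos_prefix hd_pre hv'
    have hcex : ∃ c', c' ≠ d ∧ inPos s (v ++ [c']) ∧ (∀ n', n = n' + 1 → ∃ B,
        ℓ ^ n ≤ (chainSet ℓ n' (applyHom φ s) (emb (occ φ) s (v ++ [c'])) B).ncard) := by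
      by_cases hed : e₁ = d
      · exact ⟨e₂, fun hh => hne (by rw [hed, hh]), hv2, hch₂⟩
      · exact ⟨e₁, hed, hv1, hch₁⟩
    obtain ⟨c', hc'd, hvc', hchc⟩ := hcex
    obtain ⟨P, α, β, hbr, hembP, hPα, hPβ⟩ := mkBranchPoint hφ (Ne.symm hc'd) hvd hvc'
    have hvpos : inPos s v := inPos_prefix ⟨[d], rfl⟩ hvd
    have hPαA : P ++ [α] <+: A_t := by
      refine hPα.trans (List.IsPrefix.trans ?_ hembvlA)
      have h1 : emb (occ φ) s (v ++ [d]) <+: emb (occ φ) s v' := emb_prefix _ hvd hd_pre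
      have h2 : emb (occ φ) s v' <+: emb (occ φ) s vl :=
        emb_prefix _ hv' (hvlall v' (List.mem_cons_self))
      exact h1.trans h2
    have hPSP : P ∈ SP ℓ n (applyHom φ s) := by
      refine ⟨α, β, mkSSP hl hbr ?_ ?_⟩
      · intro n' hn
        obtain ⟨B_t, hB⟩ := htail n' hn
        exact ⟨B_t, le_trans hB (Set.ncard_le_ncard (chainSet_mono_left hPαA)
          (chainSet_finite _ _ _ _ _))⟩
      · intro n' hn
        obtain ⟨B, hB⟩ := hchc n' hn
        exact ⟨B, le_trans hB (Set.ncard_le_ncard (chainSet_mono_left hPβ)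
          (chainSet_finite _ _ _ _ _))⟩
    have hsub : chainSet ℓ n (applyHom φ s) (emb (occ φ) s v') B' ⊆
        chainSet ℓ n (applyHom φ s) (emb (occ φ) s v) B' :=
      chainSet_mono_left (emb_prefix _ hvpos hvv'.1)
    have hK'ne : (chainSet ℓ n (applyHom φ s) (emb (occ φ) s v') B').Nonempty := by
      apply Set.nonempty_of_ncard_ne_zero
      have h1 : 1 ≤ (v' :: L'').length := by simp
      omega
    obtain ⟨y₀, hy₀⟩ := hK'ne
    have hPy : P <+: y₀ := by
      have h1 : P <+: emb (occ φ) s (v ++ [d]) := (List.prefix_append P [α]).trans hPα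
      have h2 : emb (occ φ) s (v ++ [d]) <+: y₀ :=
        (emb_prefix (occ φ) hvd hd_pre).trans hy₀.1
      exact h1.trans h2
    have hPB' : P <+: B' := hPy.trans hy₀.2.1
    have hPK : P ∈ chainSet ℓ n (applyHom φ s) (emb (occ φ) s v) B' := ⟨hembP, hPB', hPSP⟩
    have hPnotK' : P ∉ chainSet ℓ n (applyHom φ s) (emb (occ φ) s v') B' := by
      intro hmem
      have h1 : (emb (occ φ) s v').length ≤ P.length := hmem.1.length_le
      have h2 : (P ++ [α]).length ≤ (emb (occ φ) s (v ++ [d])).length := hPα.length_le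
      have h3 : (emb (occ φ) s (v ++ [d])).length ≤ (emb (occ φ) s v').length :=
        (emb_prefix _ hvd hd_pre).length_le
      simp only [List.length_append, List.length_cons, List.length_nil] at h2
      omega
    have hins : insert P (chainSet ℓ n (applyHom φ s) (emb (occ φ) s v') B') ⊆
        chainSet ℓ n (applyHom φ s) (emb (occ φ) s v) B' := by
      intro y hy
      rcases Set.mem_insert_iff.1 hy with rfl | hy'
      · exact hPK
      · exact hsub hy'
    have hcard2 : (chainSet ℓ n (applyHom φ s) (emb (occ φ) s v') B').ncard + 1 ≤
        (chainSet ℓ n (applyHom φ s) (emb (occ φ) s v) B').ncard := by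
      have h1 := Set.ncard_insert_of_notMem hPnotK' (chainSet_finite _ _ _ _ _)
      have h2 := Set.ncard_le_ncard hins (chainSet_finite _ _ _ _ _)
      omega
    refine ⟨B', vl, A_t, List.mem_cons_of_mem v hvlmem, ?_, hembvlA, htail, ?_⟩
    · intro w hw
      rcases List.mem_cons.1 hw with rfl | hw'
      · exact (hvv'.1).trans (hvlall v' (List.mem_cons_self))
      · exact hvlall w hw'
    · simp only [List.length_cons] at hcount' ⊢
      omega

lemma keyAux (hψ : Linear ψ) (hφ : Complete φ) (hℓ : ∀ γ, height (ψ γ) < ℓ)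
    (hl : 1 ≤ ℓ) (n : ℕ) (hk : ∀ n', n = n' + 1 → KeyStmt ψ φ ℓ s n') :
    KeyStmt ψ φ ℓ s n := by
  intro a b m hm hc
  obtain ⟨L, hLlen, hLne, hLpw, hLall⟩ := origins hψ hℓ hl hm hc
  cases L with
  | nil => exact absurd rfl hLne
  | cons v L' =>
    obtain ⟨B, vl, A_t, _, _, _, _, hcount⟩ := build hψ hφ hℓ hl n hk L' v
      (fun w hw => by
        obtain ⟨_, x, r, hd, hx⟩ := hLall w hw
        exact ⟨x, r, hd, hx.2.2⟩) hLpw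
    obtain ⟨hpa, x, r, hd, _⟩ := hLall v (List.mem_cons_self)
    exact ⟨v, B, hd.1, hpa, le_trans hLlen hcount⟩

lemma key (hψ : Linear ψ) (hφ : Complete φ) (hℓ : ∀ γ, height (ψ γ) < ℓ)
    (hl : 1 ≤ ℓ) : ∀ n, KeyStmt ψ φ ℓ s n := by
  intro n
  induction n with
  | zero => exact keyAux hψ hφ hℓ hl 0 (fun n' h => absurd h (by omega))
  | succ n ihn =>
    refine keyAux hψ hφ hℓ hl (n+1) (fun n' h => ?_)
    have : n' = n := by omega
    subst this
    exact ihn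

end Main3

end Paper

namespace Paper

/-- for a bimorphism with linear input homomorphism `ψ` and complete
output homomorphism `φ`, and `ℓ > height(ψ(γ))` for every symbol `γ`: for every
tree `s`, if `SP^ℓ_{n+1}(ψ̂(s)) ≠ ∅` then `SP^ℓ_n(φ̂(s)) ≠ ∅`. -/
theorem SP_nonempty_of_bimorphism {Γ Sg Δ : Type} {arΓ : Γ → ℕ}
    {arSg : Sg → ℕ} {arΔ : Δ → ℕ}
    (ψ : ∀ g : Γ, TreeX arSg (arΓ g)) (hψ : Linear ψ)
    (φ : ∀ g : Γ, TreeX arΔ (arΓ g)) (hφ : Complete φ)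
    (ℓ n : ℕ) (hℓ : ∀ γ : Γ, height (ψ γ) < ℓ)
    (s : Tree arΓ)
    (h : (SP ℓ (n + 1) (applyHom ψ s)).Nonempty) :
    (SP ℓ n (applyHom φ s)).Nonempty := by
  have hl : 1 ≤ ℓ := by
    cases s with
    | mk g f =>
      have := hℓ g
      omega
  obtain ⟨x, hx⟩ := h
  obtain ⟨i, j, hssp⟩ := hx
  have hk : ∀ n', n = n' + 1 → KeyStmt ψ φ ℓ s n' := fun n' _ => key hψ hφ hℓ hl n'
  have hbr := SSP_subset_branch hssp
  obtain ⟨v, r, hd⟩ := decomp_exists hψ s x hbr.1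
  obtain ⟨e₁, e₂, hne, hv1, hv2, hch₁, hch₂⟩ := repSides hψ hφ hℓ hl n hk hd ⟨i, j, hssp⟩
  obtain ⟨P, α, β, hbrP, _, hPα, hPβ⟩ := mkBranchPoint hφ hne hv1 hv2
  refine ⟨P, α, β, mkSSP hl hbrP ?_ ?_⟩
  · intro n' hn
    obtain ⟨B, hB⟩ := hch₁ n' hn
    exact ⟨B, le_trans hB (Set.ncard_le_ncard (chainSet_mono_left hPα)
      (chainSet_finite _ _ _ _ _))⟩
  · intro n' hn
    obtain ⟨B, hB⟩ := hch₂ n' hn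
    exact ⟨B, le_trans hB (Set.ncard_le_ncard (chainSet_mono_left hPβ)
      (chainSet_finite _ _ _ _ _))⟩

end Paper
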